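/- Let m ≥ 1 be an integer, β > 0, μ ∈ ℝ^m, and Σ a symmetric positive definite m×m real matrix, and let X be distributed according to the MGGD(μ, Σ, β) density. Then for every natural number k ≥ 0, E[((X−μ)ᵀ Σ^{−1} (X−μ))^{βk}] = 2^k Γ(m/(2β) + k) / Γ(m/(2β)); in particular, E[((X−μ)ᵀ Σ^{−1} (X−μ))^{β}] = m/β. -/

import Mathlib

open MeasureTheory Matrix Real

/-- The MGGD(μ, Σ, β) Lebesgue density on ℝ^m. -/
noncomputable def mggdDensity (m : ℕ) (μ : Fin m → ℝ) (S : Matrix (Fin m) (Fin m) ℝ)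
    (β : ℝ) (x : Fin m → ℝ) : ℝ :=
  β * Real.Gamma ((m : ℝ) / 2) /
      (Real.pi ^ ((m : ℝ) / 2) * Real.Gamma ((m : ℝ) / (2 * β)) *
        (2 : ℝ) ^ ((m : ℝ) / (2 * β)) * Real.sqrt S.det) *
    Real.exp (-(1 / 2) * ((x - μ) ⬝ᵥ (S⁻¹ *ᵥ (x - μ))) ^ β)

/-- if `X ~ MGGD(μ, Σ, β)` then for every natural `k ≥ 0`,
`E[((X−μ)ᵀ Σ⁻¹ (X−μ))^{βk}] = 2^k Γ(m/(2β) + k) / Γ(m/(2β))`; in particular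
`E[((X−μ)ᵀ Σ⁻¹ (X−μ))^β] = m/β`. -/
theorem mggd_radial_moments
    (m : ℕ) (hm : 1 ≤ m) (β : ℝ) (hβ : 0 < β)
    (μ : Fin m → ℝ) (S : Matrix (Fin m) (Fin m) ℝ) (hS : S.PosDef) :
    (∀ k : ℕ,
      ∫ x : Fin m → ℝ,
          ((x - μ) ⬝ᵥ (S⁻¹ *ᵥ (x - μ))) ^ (β * k) * mggdDensity m μ S β x
        = 2 ^ k * Real.Gamma ((m : ℝ) / (2 * β) + k) / Real.Gamma ((m : ℝ) / (2 * β))) ∧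
    (∫ x : Fin m → ℝ,
        ((x - μ) ⬝ᵥ (S⁻¹ *ᵥ (x - μ))) ^ β * mggdDensity m μ S β x = m / β) := by
  classical
  haveI : NeZero m := ⟨by omega⟩
  set a : ℝ := (m : ℝ) / (2 * β) with ha
  set c : ℝ := β * Real.Gamma ((m : ℝ) / 2) /
      (Real.pi ^ ((m : ℝ) / 2) * Real.Gamma a * (2 : ℝ) ^ a * Real.sqrt S.det) with hc
  have ha_pos : 0 < a := by
    have : (0:ℝ) < m := by exact_mod_cast Nat.lt_of_lt_of_le Nat.zero_lt_one hm
    positivity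
  -- matrix square-root facts
  open scoped MatrixOrder in set B := CFC.sqrt S with hBdef
  have hBB : B * B = S := by
    open scoped MatrixOrder in exact CFC.sqrt_mul_sqrt_self S hS.posSemidef.nonneg
  have hBsd : B.PosSemidef := by
    open scoped MatrixOrder in exact (CFC.sqrt_nonneg S).posSemidef
  have hBsymm : Bᵀ = B := by
    have := hBsd.1
    rwa [Matrix.IsHermitian, conjTranspose_eq_transpose_of_trivial] at this
  have hdet2 : B.det * B.det = S.det := by rw [← det_mul, hBB]
  have hdetne : B.det ≠ 0 := by
    intro h; rw [h, zero_mul] at hdet2; exact absurd hdet2.symm (ne_of_gt hS.det_pos)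
  have habs : |B.det| = Real.sqrt S.det := by
    rw [← hdet2, ← sq, Real.sqrt_sq_eq_abs]
  have hunit : IsUnit B.det := isUnit_iff_ne_zero.mpr hdetne
  have hquad : ∀ y : Fin m → ℝ, (B *ᵥ y) ⬝ᵥ (S⁻¹ *ᵥ (B *ᵥ y)) = y ⬝ᵥ y := by
    intro y
    have h1 : S⁻¹ *ᵥ (B *ᵥ y) = B⁻¹ *ᵥ y := by
      rw [← hBB, Matrix.mul_inv_rev, mulVec_mulVec, mul_assoc,
        Matrix.nonsing_inv_mul _ hunit, mul_one]
    rw [h1, dotProduct_comm, dotProduct_mulVec, ← mulVec_transpose, hBsymm,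
      mulVec_mulVec, Matrix.mul_nonsing_inv _ hunit, one_mulVec]
  -- change of variables machinery
  have hInv : Invertible B := B.invertibleOfIsUnitDet hunit
  let e : (Fin m → ℝ) ≃ᵐ (Fin m → ℝ) :=
    Homeomorph.toMeasurableEquiv
      (ContinuousLinearEquiv.toHomeomorph
        (LinearEquiv.toContinuousLinearEquiv (B.toLinearEquiv' hInv)))
  have he : ⇑e = fun y => B *ᵥ y := by
    funext y
    simp [e, Matrix.toLinearEquiv', Matrix.toLin'_apply]
  have hfun : ⇑e = ⇑(Matrix.toLin' B) := by funext y; simp [he, Matrix.toLin'_apply]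
  have hmap : Measure.map e volume = ENNReal.ofReal |B.det|⁻¹ • volume := by
    rw [show Measure.map e volume = Measure.map (⇑(Matrix.toLin' B)) volume by rw [← hfun],
      Real.map_matrix_volume_pi_eq_smul_volume_pi hdetne, abs_inv]
  have hCoV : ∀ g : (Fin m → ℝ) → ℝ,
      ∫ x, g x = |B.det| * ∫ y, g (B *ᵥ y) := by
    intro g
    have h1 := MeasureTheory.integral_map_equiv (μ := volume) e g
    rw [hmap, integral_smul_measure, ENNReal.toReal_ofReal (by positivity)] at h1
    simp only [he] at h1
    rw [← h1, smul_eq_mul, ← mul_assoc, mul_inv_cancel₀ (by simpa using hdetne), one_mul]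
  -- Euclidean transfer
  have hnorm : ∀ v : EuclideanSpace ℝ (Fin m),
      ((MeasurableEquiv.toLp 2 (Fin m → ℝ)).symm v) ⬝ᵥ ((MeasurableEquiv.toLp 2 (Fin m → ℝ)).symm v)
        = ‖v‖ ^ 2 := by
    intro v
    rw [EuclideanSpace.norm_eq, Real.sq_sqrt (by positivity)]
    simp [dotProduct, MeasurableEquiv.coe_toLp_symm, sq]
  have hEuc : ∀ f' : ℝ → ℝ, ∫ y : Fin m → ℝ, f' (y ⬝ᵥ y) =
      m • (volume (Metric.ball (0 : EuclideanSpace ℝ (Fin m)) 1)).toReal •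
        ∫ r in Set.Ioi (0 : ℝ), r ^ (m - 1) • f' (r ^ 2) := by
    intro f'
    have h1 : ∫ y : Fin m → ℝ, f' (y ⬝ᵥ y)
        = ∫ v : EuclideanSpace ℝ (Fin m), f' (‖v‖ ^ 2) := by
      rw [← (EuclideanSpace.volume_preserving_symm_measurableEquiv_toLp (Fin m)).integral_comp'
        (fun y => f' (y ⬝ᵥ y))]
      exact integral_congr_ae (Filter.Eventually.of_forall fun v => by
        simp only []; rw [hnorm v])
    have h2 := integral_fun_norm_addHaar (volume : Measure (EuclideanSpace ℝ (Fin m)))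
      (fun t => f' (t ^ 2))
    rw [finrank_euclideanSpace_fin] at h2
    rw [h1, h2]
    rfl
  -- volume of the unit ball
  have hV : (volume (Metric.ball (0 : EuclideanSpace ℝ (Fin m)) 1)).toReal
      = Real.pi ^ ((m : ℝ) / 2) / Real.Gamma ((m : ℝ) / 2 + 1) := by
    rw [EuclideanSpace.volume_ball]
    have hπ : Real.sqrt Real.pi ^ m = Real.pi ^ ((m : ℝ) / 2) := by
      rw [Real.sqrt_eq_rpow, ← Real.rpow_natCast (Real.pi ^ ((1:ℝ)/2)) m,
        ← Real.rpow_mul Real.pi_pos.le]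
      congr 1
      ring
    simp only [Fintype.card_fin, ENNReal.ofReal_one, one_pow, one_mul]
    rw [ENNReal.toReal_ofReal (by positivity), hπ]
  -- the key computation
  have key : ∀ k : ℕ,
      ∫ x : Fin m → ℝ,
          ((x - μ) ⬝ᵥ (S⁻¹ *ᵥ (x - μ))) ^ (β * k) * mggdDensity m μ S β x
        = 2 ^ k * Real.Gamma (a + k) / Real.Gamma a := by
    intro k
    set F : (Fin m → ℝ) → ℝ := fun y =>
      (y ⬝ᵥ (S⁻¹ *ᵥ y)) ^ (β * k) * (c * Real.exp (-(1/2) * (y ⬝ᵥ (S⁻¹ *ᵥ y)) ^ β)) with hF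
    have step0 : ∫ x : Fin m → ℝ,
        ((x - μ) ⬝ᵥ (S⁻¹ *ᵥ (x - μ))) ^ (β * k) * mggdDensity m μ S β x = ∫ x, F x := by
      rw [show (fun x : Fin m → ℝ =>
          ((x - μ) ⬝ᵥ (S⁻¹ *ᵥ (x - μ))) ^ (β * k) * mggdDensity m μ S β x)
          = fun x => F (x - μ) by funext x; simp only [hF, mggdDensity, hc, ha]]
      exact integral_sub_right_eq_self F μ
    set f' : ℝ → ℝ := fun t => t ^ (β * k) * (c * Real.exp (-(1/2) * t ^ β)) with hf'
    have step1 : ∫ x, F x = |B.det| * ∫ y : Fin m → ℝ, f' (y ⬝ᵥ y) := by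
      rw [hCoV F]
      congr 1
      exact integral_congr_ae (Filter.Eventually.of_forall fun y => by
        simp only [hF, hf', hquad y])
    -- radial integral
    set p : ℝ := 2 * β with hp
    set q : ℝ := (m : ℝ) - 1 + 2 * (β * k) with hq
    have hq1 : -1 < q := by
      have h1 : (1:ℝ) ≤ m := by exact_mod_cast hm
      have h2 : (0:ℝ) ≤ 2 * (β * k) := by positivity
      simp only [hq]; linarith
    have step2 : ∫ r in Set.Ioi (0 : ℝ), r ^ (m - 1) • f' (r ^ 2)
        = c * ∫ r in Set.Ioi (0 : ℝ), r ^ q * Real.exp (-(1/2) * r ^ p) := by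
      rw [← integral_const_mul]
      refine setIntegral_congr_fun measurableSet_Ioi (fun r hr => ?_)
      have hr' : (0:ℝ) < r := hr
      have h2 : (r ^ 2 : ℝ) = r ^ (2:ℝ) := by
        rw [← Real.rpow_natCast r 2]; norm_num
      simp only [hf', smul_eq_mul, h2, ← Real.rpow_natCast r (m-1),
        ← Real.rpow_mul hr'.le]
      rw [Nat.cast_sub hm, Nat.cast_one, hq, Real.rpow_add hr']
      ring
    have step3 : ∫ r in Set.Ioi (0 : ℝ), r ^ q * Real.exp (-(1/2) * r ^ p)
        = (1/2 : ℝ) ^ (-(q + 1) / p) * (1 / p) * Real.Gamma ((q + 1) / p) := by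
      have := integral_rpow_mul_exp_neg_mul_rpow (p := p) (q := q) (b := 1/2)
        (by positivity) hq1 (by norm_num)
      simpa using this
    have hqp : (q + 1) / p = a + k := by
      simp only [hq, hp, ha]; field_simp; ring
    have hhalf : (1/2 : ℝ) ^ (-(q + 1) / p) = 2 ^ a * 2 ^ (k : ℕ) := by
      rw [neg_div, hqp, one_div, Real.inv_rpow (by norm_num : (0:ℝ) ≤ 2),
        ← Real.rpow_neg (by norm_num : (0:ℝ) ≤ 2), neg_neg,
        Real.rpow_add (by norm_num : (0:ℝ) < 2), Real.rpow_natCast]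
    -- put everything together
    rw [step0, step1, hEuc f', step2, step3, hqp, hhalf, hV, habs]
    have hΓ1 : Real.Gamma ((m : ℝ) / 2 + 1) = ((m : ℝ) / 2) * Real.Gamma ((m : ℝ) / 2) := by
      rw [Real.Gamma_add_one (by positivity : ((m : ℝ) / 2) ≠ 0)]
    have hm' : (0:ℝ) < m := by exact_mod_cast Nat.lt_of_lt_of_le Nat.zero_lt_one hm
    have hΓa : (0:ℝ) < Real.Gamma a := Real.Gamma_pos_of_pos ha_pos
    have hΓm : (0:ℝ) < Real.Gamma ((m : ℝ) / 2) := Real.Gamma_pos_of_pos (by positivity)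
    have hπp : (0:ℝ) < Real.pi ^ ((m : ℝ) / 2) := by positivity
    have h2a : (0:ℝ) < (2:ℝ) ^ a := by positivity
    have hsq : (0:ℝ) < Real.sqrt S.det := Real.sqrt_pos.mpr hS.det_pos
    rw [hΓ1, hc, nsmul_eq_mul, smul_eq_mul, hp]
    field_simp
  refine ⟨key, ?_⟩
  have h1 := key 1
  have hΓa1 : Real.Gamma (a + 1) = a * Real.Gamma a := Real.Gamma_add_one ha_pos.ne'
  have hΓa : Real.Gamma a ≠ 0 := (Real.Gamma_pos_of_pos ha_pos).ne'
  rw [Nat.cast_one, mul_one, hΓa1, pow_one] at h1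
  rw [h1, ha]
  field_simp
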